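/- Let K ≥ 3 be an integer and let J be a strictly positive integer with J ≤ (K−1)/2. Then for every ω ∈ [0,1] and every vector u_{K,sp}(ω; J) obtained from u_K(ω) by keeping 2J+1 entries of largest modulus and zeroing the rest, ‖u_{K,sp}(ω; J) − u_K(ω)‖² ≤ 1/J, where ‖·‖ is the Euclidean norm. -/

import Mathlib

open scoped Classical

noncomputable section

/-- Squared Euclidean norm. -/
def sqNorm {ι : Type*} [Fintype ι] (x : ι → ℂ) : ℝ := ∑ i, ‖x i‖ ^ 2

/-- Euclidean norm. -/
def enorm {ι : Type*} [Fintype ι] (x : ι → ℂ) : ℝ := Real.sqrt (sqNorm x)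

/-- The vector `u_K(ω) ∈ ℂ^K`, with entries
`[u_K(ω)]_k = (1/K) ∑_{j=0}^{K−1} e^{−2πi j (ω − k/K)}`. -/
def uVec (K : ℕ) (ω : ℝ) : Fin K → ℂ := fun k =>
  (K : ℂ)⁻¹ * ∑ j : Fin K,
    Complex.exp (-(2 * (Real.pi : ℂ) * Complex.I * (j.1 : ℂ) * ((ω : ℂ) - (k.1 : ℂ) / (K : ℂ))))

/-- `v` is a sparsification of `u` keeping `2J+1` entries of largest modulus:
there is a set `S` of `2J+1` indices, each carrying modulus at least that of
any index outside `S`, such that `v` agrees with `u` on `S` and vanishes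
elsewhere. -/
def IsSparsification {K : ℕ} (J : ℕ) (u v : Fin K → ℂ) : Prop :=
  ∃ S : Finset (Fin K), S.card = 2 * J + 1 ∧
    (∀ k ∈ S, ∀ l ∉ S, ‖u l‖ ≤ ‖u k‖) ∧
    v = fun k => if k ∈ S then u k else 0

/- ### Auxiliary lemmas -/

lemma telescope_aux (J : ℕ) (hJ : 1 ≤ J) (N : ℕ) :
    ∑ n ∈ Finset.Icc (J+1) N, (1:ℝ)/(2*(n:ℝ)-1)^2
      ≤ 1/(4*(J:ℝ)) - 1/(4 * ((max N J : ℕ) : ℝ)) := by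
  induction N with
  | zero => simp [Finset.Icc_eq_empty_of_lt, hJ, Nat.max_eq_right (Nat.zero_le J)]
  | succ N ih =>
    rcases le_or_gt (N+1) J with h | h
    · rw [Finset.Icc_eq_empty (by omega), Nat.max_eq_right (by omega)]
      simp
    · have hNJ : J ≤ N := by omega
      rw [Finset.sum_Icc_succ_top (by omega)]
      rw [Nat.max_eq_left hNJ] at ih
      rw [Nat.max_eq_left (by omega)]
      have hN' : (1:ℝ) ≤ (N:ℝ) := by exact_mod_cast (by omega : 1 ≤ N)
      have key : (1:ℝ)/(2*((N:ℝ)+1)-1)^2 ≤ 1/(4*(N:ℝ)) - 1/(4*((N:ℝ)+1)) := by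
        rw [div_sub_div _ _ (by linarith) (by linarith),
          div_le_div_iff₀ (by nlinarith) (by nlinarith)]
        nlinarith
      push_cast at ih ⊢
      linarith

lemma telescope (J : ℕ) (hJ : 1 ≤ J) (N : ℕ) :
    ∑ n ∈ Finset.Icc (J+1) N, (1:ℝ)/(2*(n:ℝ)-1)^2 ≤ 1/(4*(J:ℝ)) := by
  refine (telescope_aux J hJ N).trans ?_
  have : (0:ℝ) < ((max N J : ℕ) : ℝ) := by
    have : 1 ≤ max N J := le_trans hJ (le_max_right _ _)
    exact_mod_cast by omega
  have : 0 ≤ 1/(4 * ((max N J : ℕ) : ℝ)) := by positivity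
  linarith

lemma exchange {ι : Type*} [Fintype ι] [DecidableEq ι] (f : ι → ℝ)
    (S T : Finset ι) (hcard : T.card = S.card)
    (hmax : ∀ k ∈ S, ∀ l ∉ S, f l ≤ f k) :
    ∑ k ∈ Sᶜ, f k ≤ ∑ k ∈ Tᶜ, f k := by
  have h1 : ∑ k ∈ Sᶜ, f k = ∑ k ∈ Sᶜ ∩ Tᶜ, f k + ∑ k ∈ Sᶜ ∩ T, f k := by
    rw [← Finset.sum_union (Finset.disjoint_left.2 (fun a ha hb =>
      (Finset.mem_compl.1 (Finset.mem_inter.1 ha).2) (Finset.mem_inter.1 hb).2))]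
    congr 1
    ext a; simp only [Finset.mem_union, Finset.mem_inter, Finset.mem_compl]; tauto
  have h2 : ∑ k ∈ Tᶜ, f k = ∑ k ∈ Sᶜ ∩ Tᶜ, f k + ∑ k ∈ S ∩ Tᶜ, f k := by
    rw [← Finset.sum_union (Finset.disjoint_left.2 (fun a ha hb =>
      (Finset.mem_compl.1 (Finset.mem_inter.1 ha).1) (Finset.mem_inter.1 hb).1))]
    congr 1
    ext a; simp only [Finset.mem_union, Finset.mem_inter, Finset.mem_compl]; tauto
  have hcard2 : (Sᶜ ∩ T).card = (S ∩ Tᶜ).card := by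
    have e1 : (S ∩ T).card + (Sᶜ ∩ T).card = T.card := by
      rw [← Finset.card_union_of_disjoint (Finset.disjoint_left.2 (fun a ha hb =>
        (Finset.mem_compl.1 (Finset.mem_inter.1 hb).1) (Finset.mem_inter.1 ha).1))]
      congr 1
      ext a; simp only [Finset.mem_union, Finset.mem_inter, Finset.mem_compl]; tauto
    have e2 : (S ∩ T).card + (S ∩ Tᶜ).card = S.card := by
      rw [← Finset.card_union_of_disjoint (Finset.disjoint_left.2 (fun a ha hb =>
        (Finset.mem_compl.1 (Finset.mem_inter.1 hb).2) (Finset.mem_inter.1 ha).2))]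
      congr 1
      ext a; simp only [Finset.mem_union, Finset.mem_inter, Finset.mem_compl]; tauto
    omega
  have hkey : ∑ k ∈ Sᶜ ∩ T, f k ≤ ∑ k ∈ S ∩ Tᶜ, f k := by
    rcases (S ∩ Tᶜ).eq_empty_or_nonempty with hB | hB
    · have hA : Sᶜ ∩ T = ∅ := Finset.card_eq_zero.1 (by rw [hcard2, hB]; simp)
      simp [hA, hB]
    · set c := (S ∩ Tᶜ).inf' hB f with hc
      have hup : ∀ a ∈ Sᶜ ∩ T, f a ≤ c := by
        intro a ha
        refine Finset.le_inf' hB _ (fun b hb => ?_)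
        exact hmax b (Finset.mem_inter.1 hb).1 a (Finset.mem_compl.1 (Finset.mem_inter.1 ha).1)
      calc ∑ k ∈ Sᶜ ∩ T, f k ≤ (Sᶜ ∩ T).card • c := Finset.sum_le_card_nsmul _ _ _ hup
      _ = (S ∩ Tᶜ).card • c := by rw [hcard2]
      _ ≤ ∑ k ∈ S ∩ Tᶜ, f k := Finset.card_nsmul_le_sum _ _ _ (fun b hb => Finset.inf'_le _ hb)
  linarith

lemma norm_exp_I_sub_one (θ : ℝ) :
    ‖Complex.exp ((θ:ℂ) * Complex.I) - 1‖ = 2 * |Real.sin (θ/2)| := by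
  have h : Complex.exp ((θ:ℂ) * Complex.I) - 1
      = Complex.ofReal (Real.cos θ - 1) + Complex.ofReal (Real.sin θ) * Complex.I := by
    rw [Complex.exp_mul_I]
    push_cast
    ring
  rw [h, Complex.norm_def, Complex.normSq_add_mul_I]
  rw [Real.abs_sin_half]
  rw [show (Real.cos θ - 1)^2 + (Real.sin θ)^2 = 2^2 * ((1 - Real.cos θ)/2) by
    have := Real.sin_sq_add_cos_sq θ; nlinarith]
  rw [Real.sqrt_mul (by norm_num), Real.sqrt_sq (by norm_num)]

lemma sin_ge_min (y : ℝ) (h0 : 0 ≤ y) (h1 : y ≤ 1) :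
    2 * min y (1 - y) ≤ Real.sin (Real.pi * y) := by
  have hpi := Real.pi_pos
  rcases le_total y (2⁻¹) with h | h
  · rw [min_eq_left (by linarith)]
    have h2 := Real.mul_le_sin (x := Real.pi * y) (by positivity) (by nlinarith)
    calc 2*y = 2/Real.pi * (Real.pi * y) := by field_simp
    _ ≤ _ := h2
  · rw [min_eq_right (by linarith),
      show Real.pi * y = Real.pi - Real.pi * (1-y) by ring, Real.sin_pi_sub]
    have h2 := Real.mul_le_sin (x := Real.pi * (1-y)) (by nlinarith) (by nlinarith)
    calc 2*(1-y) = 2/Real.pi * (Real.pi * (1-y)) := by field_simp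
    _ ≤ _ := h2

lemma uVec_norm_le (K : ℕ) (hK : 0 < K) (ω : ℝ) (k : Fin K) (s : ℝ) (hs : 0 < s)
    (hlow : s ≤ |Real.sin (Real.pi * (ω - (k:ℕ)/K))|) :
    ‖uVec K ω k‖ ≤ 1/(K * s) := by
  set w : ℝ := ω - (k:ℕ)/K with hw
  set z : ℂ := Complex.exp (((-2*Real.pi*w : ℝ) : ℂ) * Complex.I) with hz
  have hnorm1 : ‖z - 1‖ = 2 * |Real.sin (Real.pi * w)| := by
    rw [hz, norm_exp_I_sub_one]
    rw [show (-2*Real.pi*w)/2 = -(Real.pi * w) by ring, Real.sin_neg, abs_neg]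
  have hzne : z ≠ 1 := by
    intro h
    rw [h] at hnorm1
    simp only [sub_self, norm_zero] at hnorm1
    have h2 : (0:ℝ) < |Real.sin (Real.pi * w)| := lt_of_lt_of_le hs hlow
    linarith
  have hterm : ∀ j : Fin K,
      Complex.exp (-(2 * (Real.pi : ℂ) * Complex.I * ((j:ℕ) : ℂ) * ((ω : ℂ) - ((k:ℕ) : ℂ) / (K : ℂ))))
        = z ^ (j:ℕ) := by
    intro j
    rw [hz, ← Complex.exp_nat_mul]
    congr 1
    have hKne : ((K:ℝ):ℂ) ≠ 0 := by
      simp only [ne_eq, Complex.ofReal_natCast, Nat.cast_eq_zero]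
      omega
    rw [hw]
    push_cast
    field_simp
  have hsum : uVec K ω k = (K : ℂ)⁻¹ * ((z ^ K - 1) / (z - 1)) := by
    unfold uVec
    congr 1
    rw [Finset.sum_congr rfl (fun j _ => hterm j), Fin.sum_univ_eq_sum_range (fun j => z ^ j) K,
      geom_sum_eq hzne]
  rw [hsum]
  rw [norm_mul, norm_div]
  have hKpos : (0:ℝ) < K := by exact_mod_cast hK
  have h1 : ‖(K:ℂ)⁻¹‖ = 1/(K:ℝ) := by
    rw [norm_inv]
    simp
  have h2 : ‖z ^ K - 1‖ ≤ 2 := by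
    have : ‖z‖ = 1 := by
      rw [hz]
      exact Complex.norm_exp_ofReal_mul_I _
    calc ‖z ^ K - 1‖ ≤ ‖z ^ K‖ + ‖(1:ℂ)‖ := norm_sub_le _ _
    _ = 2 := by rw [norm_pow, this]; norm_num
  have h3 : 2 * s ≤ ‖z - 1‖ := by rw [hnorm1]; linarith
  have h4 : (0:ℝ) < ‖z - 1‖ := lt_of_lt_of_le (by positivity) h3
  rw [h1]
  calc 1/(K:ℝ) * (‖z ^ K - 1‖ / ‖z - 1‖) ≤ 1/(K:ℝ) * (2 / (2*s)) := by
        apply mul_le_mul_of_nonneg_left _ (by positivity)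
        exact div_le_div₀ (by norm_num) h2 (by positivity) h3
  _ = 1/(K * s) := by field_simp

set_option maxHeartbeats 2000000 in
/-- For `K ≥ 3`, `1 ≤ J ≤ (K−1)/2`, every `ω ∈ [0,1]` and
every sparsification of `u_K(ω)` keeping `2J+1` entries of largest modulus,
the squared Euclidean error satisfies `‖u_{K,sp}(ω;J) − u_K(ω)‖² ≤ 1/J`. -/
theorem sparsification_error (K : ℕ) (hK : 3 ≤ K) (J : ℕ) (hJ : 0 < J)
    (hJK : (J : ℝ) ≤ ((K : ℝ) - 1) / 2) :
    ∀ ω ∈ Set.Icc (0 : ℝ) 1, ∀ v : Fin K → ℂ, IsSparsification J (uVec K ω) v →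
      sqNorm (v - uVec K ω) ≤ 1 / (J : ℝ) := by
  intro ω hω v hspars
  obtain ⟨S, hScard, hSmax, hv⟩ := hspars
  have hKpos : 0 < K := by omega
  have h2JK : 2*J + 1 ≤ K := by
    have h' : (2*J + 1 : ℝ) ≤ K := by push_cast; linarith
    exact_mod_cast h'
  -- the grid setup
  set k₀ : ℤ := round ((K:ℝ) * ω) with hk₀
  have hε : |(K:ℝ)*ω - k₀| ≤ 1/2 := abs_sub_round _
  set m : Fin K → ℤ := fun k => (((k:ℕ):ℤ) - k₀ + J) % K - J with hm'
  have hKz : (0:ℤ) < (K:ℤ) := by exact_mod_cast hKpos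
  have hmlb : ∀ k, -(J:ℤ) ≤ m k := by
    intro k
    have := Int.emod_nonneg (((k:ℕ):ℤ) - k₀ + J) (by omega : (K:ℤ) ≠ 0)
    simp only [hm']
    omega
  have hmub : ∀ k, m k ≤ (K:ℤ) - 1 - J := by
    intro k
    have := Int.emod_lt_of_pos (((k:ℕ):ℤ) - k₀ + J) hKz
    simp only [hm']
    omega
  have hdecomp : ∀ k : Fin K, ∃ q : ℤ, ((k:ℕ):ℤ) - k₀ = K * q + m k := by
    intro k
    refine ⟨(((k:ℕ):ℤ) - k₀ + J) / K, ?_⟩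
    have := Int.mul_ediv_add_emod (((k:ℕ):ℤ) - k₀ + J) K
    simp only [hm']
    omega
  have hminj : ∀ k k' : Fin K, m k = m k' → k = k' := by
    intro k k' hmm
    obtain ⟨q, hq⟩ := hdecomp k
    obtain ⟨q', hq'⟩ := hdecomp k'
    have hdvd : (K:ℤ) ∣ ((k:ℕ):ℤ) - ((k':ℕ):ℤ) := ⟨q - q', by rw [mul_sub]; omega⟩
    have hb1 : ((k:ℕ):ℤ) < K := by exact_mod_cast k.isLt
    have hb2 : ((k':ℕ):ℤ) < K := by exact_mod_cast k'.isLt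
    have h0 : ((k:ℕ):ℤ) - ((k':ℕ):ℤ) = 0 := by
      refine Int.eq_zero_of_abs_lt_dvd hdvd ?_
      rw [abs_lt]
      constructor <;> omega
    have : (k:ℕ) = (k':ℕ) := by omega
    exact Fin.ext this
  set T : Finset (Fin K) := Finset.univ.filter (fun k => m k ≤ J) with hT
  have hmemT : ∀ k, k ∈ T ↔ m k ≤ J := by intro k; simp [hT]
  have hjlt : ∀ n : ℤ, ((k₀ + n) % K).toNat < K := by
    intro n
    have h1 := Int.emod_nonneg (k₀ + n) (by omega : (K:ℤ) ≠ 0)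
    have h2 := Int.emod_lt_of_pos (k₀ + n) hKz
    omega
  set jmap : ℤ → Fin K := fun n => ⟨((k₀ + n) % K).toNat, hjlt n⟩ with hjm
  have hmj : ∀ n : ℤ, -(J:ℤ) ≤ n → n ≤ J → m (jmap n) = n := by
    intro n hn1 hn2
    have hval : (((jmap n : Fin K) : ℕ) : ℤ) = (k₀ + n) % K := by
      simp only [hjm]
      exact Int.toNat_of_nonneg (Int.emod_nonneg _ (by omega))
    have hmod : Int.ModEq (K:ℤ) ((k₀+n) % K) (k₀+n) := Int.emod_emod_of_dvd _ dvd_rfl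
    have hmod2 := (hmod.sub_right k₀).add_right (J:ℤ)
    have heq : ((k₀+n) % K - k₀ + J) % K = (k₀ + n - k₀ + J) % K := hmod2
    have heq2 : (k₀ + n - k₀ + J : ℤ) = n + J := by ring
    have heq3 : (n + (J:ℤ)) % K = n + J :=
      Int.emod_eq_of_lt (by omega) (by omega)
    simp only [hm', hval]
    rw [heq, heq2, heq3]
    ring
  have hTcard : T.card = 2*J + 1 := by
    have hc : T.card = (Finset.Icc (-(J:ℤ)) (J:ℤ)).card := by
      apply Finset.card_nbij' (i := fun k => m k) (j := jmap)
      · intro k hk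
        rw [Finset.mem_coe, Finset.mem_Icc]
        exact ⟨hmlb k, (hmemT k).1 hk⟩
      · intro n hn
        rw [Finset.mem_coe, Finset.mem_Icc] at hn
        exact (hmemT _).2 (by rw [hmj n hn.1 hn.2]; exact hn.2)
      · intro k hk
        exact hminj _ _ (hmj (m k) (hmlb k) ((hmemT k).1 hk))
      · intro n hn
        rw [Finset.mem_coe, Finset.mem_Icc] at hn
        exact hmj n hn.1 hn.2
    rw [hc, Int.card_Icc]
    omega
  have herr : sqNorm (v - uVec K ω) = ∑ k ∈ Sᶜ, ‖uVec K ω k‖^2 := by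
    unfold sqNorm
    rw [← Finset.sum_add_sum_compl S]
    have hS0 : ∀ k ∈ S, ‖(v - uVec K ω) k‖^2 = 0 := by
      intro k hk
      rw [hv]
      simp [Pi.sub_apply, hk]
    rw [Finset.sum_eq_zero hS0, zero_add]
    apply Finset.sum_congr rfl
    intro k hk
    rw [hv]
    simp [Pi.sub_apply, Finset.mem_compl.1 hk]
  have hexch : ∑ k ∈ Sᶜ, ‖uVec K ω k‖^2 ≤ ∑ k ∈ Tᶜ, ‖uVec K ω k‖^2 := by
    apply exchange _ S T (by rw [hTcard, hScard]) ?_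
    intro k hk l hl
    exact pow_le_pow_left₀ (norm_nonneg _) (hSmax k hk l hl) 2
  set f : ℕ → ℝ := fun n => 1/(2*(n:ℝ)-1)^2 + 1/(2*((K:ℝ)-(n:ℝ))-1)^2 with hf
  have hf0 : ∀ n, 0 ≤ f n := by intro n; simp only [hf]; positivity
  have hKr : (0:ℝ) < K := by exact_mod_cast hKpos
  have hJr : (1:ℝ) ≤ (J:ℝ) := by exact_mod_cast hJ
  have hpt : ∀ k ∈ Tᶜ, ‖uVec K ω k‖^2 ≤ f ((m k).toNat) := by
    intro k hk
    have hkT : ¬ (m k ≤ (J:ℤ)) := by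
      have := Finset.mem_compl.1 hk
      rw [hmemT] at this
      exact this
    have hM1 : (J:ℤ) + 1 ≤ m k := by omega
    have hM2 : m k ≤ (K:ℤ) - 1 - J := hmub k
    obtain ⟨q, hq⟩ := hdecomp k
    set ε : ℝ := (K:ℝ)*ω - k₀ with hεdef
    set y : ℝ := (((m k):ℝ) - ε)/K with hy
    have hMr1 : (J:ℝ)+1 ≤ ((m k):ℝ) := by exact_mod_cast hM1
    have hMr2 : ((m k):ℝ) ≤ (K:ℝ)-1-(J:ℝ) := by exact_mod_cast hM2
    have hεb : |ε| ≤ 1/2 := hε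
    obtain ⟨hεb1, hεb2⟩ := abs_le.1 hεb
    have hy0 : 0 < y := by
      rw [hy]
      apply div_pos _ hKr
      linarith
    have hy1 : y < 1 := by
      rw [hy, div_lt_one hKr]
      linarith
    have hqr : ((k:ℕ):ℝ) - (k₀:ℝ) = (K:ℝ)*(q:ℝ) + ((m k):ℝ) := by exact_mod_cast hq
    have hwq : ω - ((k:ℕ):ℝ)/K = -y - (q:ℝ) := by
      rw [hy, hεdef]
      field_simp
      linarith
    set a : ℝ := (2*((m k):ℝ)-1)/(2*K) with ha
    set b : ℝ := (2*((K:ℝ)-((m k):ℝ))-1)/(2*K) with hb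
    have ha0 : 0 < a := by rw [ha]; apply div_pos _ (by linarith); linarith
    have hb0 : 0 < b := by rw [hb]; apply div_pos _ (by linarith); linarith
    set s : ℝ := 2 * min a b with hs
    have hs0 : 0 < s := by
      rw [hs]
      rcases le_total a b with h | h
      · rw [min_eq_left h]; linarith
      · rw [min_eq_right h]; linarith
    have hsin : s ≤ |Real.sin (Real.pi * (ω - ((k:ℕ):ℝ)/K))| := by
      rw [hwq, show Real.pi * (-y - (q:ℝ)) = -(Real.pi*y) - (q:ℝ)*Real.pi by ring,
        Real.sin_sub, Real.sin_int_mul_pi, mul_zero, sub_zero, abs_mul,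
        Real.sin_neg, abs_neg, Real.abs_cos_int_mul_pi, mul_one]
      have hsy : 0 ≤ Real.sin (Real.pi * y) := by
        apply Real.sin_nonneg_of_nonneg_of_le_pi
        · positivity
        · nlinarith [Real.pi_pos]
      rw [abs_of_nonneg hsy]
      refine le_trans ?_ (sin_ge_min y (le_of_lt hy0) (le_of_lt hy1))
      rw [hs]
      have h1 : min a b ≤ min y (1 - y) := by
        apply le_min
        · refine (min_le_left a b).trans ?_
          rw [ha, hy, div_le_div_iff₀ (by linarith) hKr]
          nlinarith
        · refine (min_le_right a b).trans ?_
          rw [hb, hy]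
          rw [show 1 - (((m k):ℝ) - ε)/K = ((K:ℝ) - ((m k):ℝ) + ε)/K by field_simp; ring]
          rw [div_le_div_iff₀ (by linarith) hKr]
          nlinarith
      linarith
    have hnorm := uVec_norm_le K hKpos ω k s hs0 hsin
    have hsq : ‖uVec K ω k‖^2 ≤ (1/((K:ℝ)*s))^2 :=
      pow_le_pow_left₀ (norm_nonneg _) hnorm 2
    have hKs : (K:ℝ)*s = min (2*((m k):ℝ)-1) (2*((K:ℝ)-((m k):ℝ))-1) := by
      rw [hs, ha, hb]
      rcases le_total ((2*((m k):ℝ)-1)/(2*K)) ((2*((K:ℝ)-((m k):ℝ))-1)/(2*K)) with h | h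
      · rw [min_eq_left h, min_eq_left (by
          rw [div_le_div_iff₀ (by linarith) (by linarith)] at h; nlinarith)]
        field_simp
      · rw [min_eq_right h, min_eq_right (by
          rw [div_le_div_iff₀ (by linarith) (by linarith)] at h; nlinarith)]
        field_simp
    have hfval : f ((m k).toNat) = 1/(2*((m k):ℝ)-1)^2 + 1/(2*((K:ℝ)-((m k):ℝ))-1)^2 := by
      have hcast : (((m k).toNat : ℕ) : ℝ) = ((m k) : ℝ) := by
        rw [← Int.cast_natCast]
        congr 1
        exact Int.toNat_of_nonneg (by omega)
      simp only [hf, hcast]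
    rw [hfval]
    refine hsq.trans ?_
    rw [hKs]
    rcases le_total (2*((m k):ℝ)-1) (2*((K:ℝ)-((m k):ℝ))-1) with h | h
    · rw [min_eq_left h]
      have : 0 ≤ 1/(2*((K:ℝ)-((m k):ℝ))-1)^2 := by positivity
      rw [div_pow, one_pow]
      linarith
    · rw [min_eq_right h]
      have : 0 ≤ 1/(2*((m k):ℝ)-1)^2 := by positivity
      rw [div_pow, one_pow]
      linarith
  have hsum1 : ∑ k ∈ Tᶜ, ‖uVec K ω k‖^2 ≤ ∑ n ∈ Finset.Icc (J+1) (K-1-J), f n := by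
    have hinj : ∀ x ∈ Tᶜ, ∀ y ∈ Tᶜ, (m x).toNat = (m y).toNat → x = y := by
      intro x hx y hy hxy
      have hx' : ¬ (m x ≤ (J:ℤ)) := by rw [← hmemT x]; exact Finset.mem_compl.1 hx
      have hy' : ¬ (m y ≤ (J:ℤ)) := by rw [← hmemT y]; exact Finset.mem_compl.1 hy
      exact hminj x y (by omega)
    calc ∑ k ∈ Tᶜ, ‖uVec K ω k‖^2 ≤ ∑ k ∈ Tᶜ, f ((m k).toNat) := Finset.sum_le_sum hpt
    _ = ∑ n ∈ Tᶜ.image (fun k => (m k).toNat), f n := (Finset.sum_image hinj).symm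
    _ ≤ ∑ n ∈ Finset.Icc (J+1) (K-1-J), f n := by
        apply Finset.sum_le_sum_of_subset_of_nonneg _ (fun n _ _ => hf0 n)
        intro n hn
        obtain ⟨k, hk, hkn⟩ := Finset.mem_image.1 hn
        have hk1 : ¬ (m k ≤ (J:ℤ)) := by rw [← hmemT k]; exact Finset.mem_compl.1 hk
        have hk2 : m k ≤ (K:ℤ) - 1 - J := hmub k
        rw [Finset.mem_Icc]
        omega
  have hsplit : ∑ n ∈ Finset.Icc (J+1) (K-1-J), f n
      = (∑ n ∈ Finset.Icc (J+1) (K-1-J), 1/(2*(n:ℝ)-1)^2)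
        + ∑ n ∈ Finset.Icc (J+1) (K-1-J), 1/(2*((K:ℝ)-(n:ℝ))-1)^2 := by
    rw [← Finset.sum_add_distrib]
  have hsecond : ∑ n ∈ Finset.Icc (J+1) (K-1-J), 1/(2*((K:ℝ)-(n:ℝ))-1)^2
      = ∑ n ∈ Finset.Icc (J+1) (K-1-J), 1/(2*(n:ℝ)-1)^2 := by
    apply Finset.sum_nbij' (i := fun n => K - n) (j := fun n => K - n)
    · intro n hn
      rw [Finset.mem_Icc] at hn ⊢
      omega
    · intro n hn
      rw [Finset.mem_Icc] at hn ⊢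
      omega
    · intro n hn
      rw [Finset.mem_Icc] at hn
      omega
    · intro n hn
      rw [Finset.mem_Icc] at hn
      omega
    · intro n hn
      rw [Finset.mem_Icc] at hn
      have hnK : n ≤ K := by omega
      rw [Nat.cast_sub hnK]
  have htel := telescope J hJ (K-1-J)
  have hfin : sqNorm (v - uVec K ω) ≤ 1/(4*(J:ℝ)) + 1/(4*(J:ℝ)) := by
    rw [herr]
    refine hexch.trans (hsum1.trans ?_)
    rw [hsplit, hsecond]
    linarith
  refine hfin.trans ?_
  rw [div_add_div _ _ (by linarith) (by linarith), div_le_div_iff₀ (by nlinarith) (by linarith)]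
  nlinarith
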